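/- Let φ = (φ₁,φ₂), where φ₁, φ₂ ∈ ℂ[[u₁,u₂]] are formal power series whose coefficients vanish in all total degrees ≤ 1, and let r = (r₁,r₂), where r₁, r₂ ∈ ℂ[[w₁,w₂]] are formal power series whose coefficients vanish in all total degrees ≤ 1 and which are convergent, i.e., there exist C > 0 and ρ > 0 such that |coeff_m(r_j)| ≤ C·ρ^{|m|} for all multi-indices m and j = 1,2. Denote by φ̄_j and r̄_j the majorant series whose coefficient at each multi-index m is |coeff_m(φ_j)| resp. |coeff_m(r_j)|. Assume that for j = 1,2 and every multi-index m, |coeff_m(φ_j)| ≤ coeff_m( r̄_j(u₁ + φ̄₁(u), u₂ + φ̄₂(u)) ), where the substitution of the series (u₁+φ̄₁, u₂+φ̄₂) (which have zero constant terms) into r̄_j is the usual composition of formal power series. Then φ₁ and φ₂ are convergent: there exist C′ > 0 and ρ′ > 0 such that |coeff_m(φ_j)| ≤ C′·ρ′^{|m|} for all m and j = 1,2. -/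

import Mathlib

/-- The multi-index `(a, b)` as an element of `Fin 2 →₀ ℕ`. -/
noncomputable def idx (a b : ℕ) : Fin 2 →₀ ℕ :=
  Finsupp.single 0 a + Finsupp.single 1 b

/-- The majorant series of a complex formal power series in two variables: the series
whose coefficient at each multi-index is the absolute value of the original one. -/
noncomputable def majorant (f : MvPowerSeries (Fin 2) ℂ) : MvPowerSeries (Fin 2) ℝ :=
  fun m => ‖MvPowerSeries.coeff m f‖

/-- Composition (substitution) `r(w₁, w₂)` of a formal power series `r` in two variables
with a pair of formal power series `w₁, w₂`.  When `w₁, w₂` have zero constant term,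
the coefficient of the composition at a multi-index `m` only involves the monomials
`w₁^{k₁}w₂^{k₂}` with `k₁ + k₂ ≤ |m|`, so the following finite sum is the usual
composition of formal power series. -/
noncomputable def substPair (r : MvPowerSeries (Fin 2) ℝ)
    (w₁ w₂ : MvPowerSeries (Fin 2) ℝ) : MvPowerSeries (Fin 2) ℝ :=
  fun m =>
    ∑ k ∈ Finset.range (m 0 + m 1 + 1) ×ˢ Finset.range (m 0 + m 1 + 1),
      MvPowerSeries.coeff (idx k.1 k.2) r *
        MvPowerSeries.coeff m (w₁ ^ k.1 * w₂ ^ k.2)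



namespace Siegel

open Finset MvPowerSeries

lemma idx_apply_zero (a b : ℕ) : (idx a b) 0 = a := by
  simp [idx, Finsupp.single_apply]

lemma idx_apply_one (a b : ℕ) : (idx a b) 1 = b := by
  simp [idx, Finsupp.single_apply]

lemma eq_idx (m : Fin 2 →₀ ℕ) : m = idx (m 0) (m 1) := by
  ext i
  fin_cases i
  · simp [idx_apply_zero]
  · simp [idx_apply_one]

/-- The finite set of multi-indices of total degree `n`. -/
noncomputable def S (n : ℕ) : Finset (Fin 2 →₀ ℕ) :=
  (Finset.HasAntidiagonal.antidiagonal n).image fun p => idx p.1 p.2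

lemma mem_S {n : ℕ} {m : Fin 2 →₀ ℕ} : m ∈ S n ↔ m 0 + m 1 = n := by
  constructor
  · rintro h
    rcases Finset.mem_image.1 h with ⟨p, hp, rfl⟩
    rw [idx_apply_zero, idx_apply_one]
    exact Finset.HasAntidiagonal.mem_antidiagonal.1 hp
  · intro h
    exact Finset.mem_image.2 ⟨(m 0, m 1), Finset.HasAntidiagonal.mem_antidiagonal.2 h, (eq_idx m).symm⟩

/-- Total degree `n` part of the coefficients. -/
noncomputable def T (f : MvPowerSeries (Fin 2) ℝ) (n : ℕ) : ℝ :=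
  ∑ m ∈ S n, MvPowerSeries.coeff m f

lemma T_nonneg {f : MvPowerSeries (Fin 2) ℝ} (hf : ∀ m, 0 ≤ MvPowerSeries.coeff m f)
    (n : ℕ) : 0 ≤ T f n :=
  Finset.sum_nonneg fun m _ => hf m

lemma T_add (f g : MvPowerSeries (Fin 2) ℝ) (n : ℕ) : T (f + g) n = T f n + T g n := by
  simp [T, Finset.sum_add_distrib]

lemma T_one (n : ℕ) : T 1 n = if n = 0 then 1 else 0 := by
  classical
  rw [T]
  rw [Finset.sum_congr rfl (fun m _ => MvPowerSeries.coeff_one (R := ℝ) m)]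
  rw [Finset.sum_ite_eq' (S n) (0 : Fin 2 →₀ ℕ) (fun _ => (1:ℝ))]
  have : (0 : Fin 2 →₀ ℕ) ∈ S n ↔ n = 0 := by
    rw [mem_S]; simp [eq_comm]
  split_ifs with h1 h2 h2 <;> simp_all

lemma T_X (i : Fin 2) (n : ℕ) : T (MvPowerSeries.X i) n = if n = 1 then 1 else 0 := by
  classical
  rw [T]
  rw [Finset.sum_congr rfl (fun m _ => MvPowerSeries.coeff_X (R := ℝ) m i)]
  rw [Finset.sum_ite_eq' (S n) (Finsupp.single i 1) (fun _ => (1:ℝ))]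
  have : (Finsupp.single i 1 : Fin 2 →₀ ℕ) ∈ S n ↔ n = 1 := by
    rw [mem_S]
    fin_cases i <;> simp [Finsupp.single_apply, eq_comm]
  split_ifs with h1 h2 h2 <;> simp_all

lemma T_mul (f g : MvPowerSeries (Fin 2) ℝ) (n : ℕ) :
    T (f * g) n = ∑ p ∈ Finset.HasAntidiagonal.antidiagonal n, T f p.1 * T g p.2 := by
  classical
  have hL : T (f * g) n =
      ∑ x ∈ (S n).biUnion (fun m => Finset.HasAntidiagonal.antidiagonal m),
        MvPowerSeries.coeff x.1 f * MvPowerSeries.coeff x.2 g := by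
    rw [T, Finset.sum_congr rfl (fun m _ => MvPowerSeries.coeff_mul (R := ℝ) m f g)]
    rw [Finset.sum_biUnion]
    intro a _ b _ hab
    simp only [Finset.disjoint_left]
    intro x hxa hxb
    exact hab ((Finset.HasAntidiagonal.mem_antidiagonal.1 hxa).symm.trans (Finset.HasAntidiagonal.mem_antidiagonal.1 hxb))
  have hR : ∑ p ∈ Finset.HasAntidiagonal.antidiagonal n, T f p.1 * T g p.2 =
      ∑ x ∈ (Finset.HasAntidiagonal.antidiagonal n).biUnion (fun p => (S p.1) ×ˢ (S p.2)),
        MvPowerSeries.coeff x.1 f * MvPowerSeries.coeff x.2 g := by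
    rw [Finset.sum_biUnion]
    · exact Finset.sum_congr rfl fun p _ => by
        rw [T, T, Finset.sum_mul_sum, Finset.sum_product]
    · intro a ha b hb hab
      simp only [Finset.disjoint_left]
      intro x hxa hxb
      rcases Finset.mem_product.1 hxa with ⟨h1a, h2a⟩
      rcases Finset.mem_product.1 hxb with ⟨h1b, h2b⟩
      apply hab
      have e1 := mem_S.1 h1a; have e2 := mem_S.1 h2a
      have e3 := mem_S.1 h1b; have e4 := mem_S.1 h2b
      have : a.1 = b.1 := e1 ▸ e3 ▸ rfl
      have hA := Finset.HasAntidiagonal.mem_antidiagonal.1 ha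
      have hB := Finset.HasAntidiagonal.mem_antidiagonal.1 hb
      ext
      · exact this
      · omega
  rw [hL, hR]
  apply Finset.sum_congr _ (fun _ _ => rfl)
  ext x
  simp only [Finset.mem_biUnion, Finset.HasAntidiagonal.mem_antidiagonal, Finset.mem_product,
    Finset.HasAntidiagonal.mem_antidiagonal, mem_S]
  constructor
  · rintro ⟨m, hm, hx⟩
    refine ⟨(x.1 0 + x.1 1, x.2 0 + x.2 1), ?_, rfl, rfl⟩
    have h0 := congrArg (fun z => z 0) hx
    have h1 := congrArg (fun z => z 1) hx
    simp only [Finsupp.add_apply] at h0 h1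
    simpa using by omega
  · rintro ⟨p, hp, h1, h2⟩
    refine ⟨x.1 + x.2, ?_, rfl⟩
    simp only [Finsupp.add_apply]
    omega

end Siegel


namespace Siegel2

open Finset PowerSeries

/-- Coefficients of a product of nonneg series are nonneg. -/
lemma mul_nonneg' {f g : PowerSeries ℝ} (hf : ∀ n, 0 ≤ coeff n f)
    (hg : ∀ n, 0 ≤ coeff n g) (n : ℕ) : 0 ≤ coeff n (f * g) := by
  rw [coeff_mul]
  exact Finset.sum_nonneg fun p _ => mul_nonneg (hf p.1) (hg p.2)

lemma pow_nonneg' {f : PowerSeries ℝ} (hf : ∀ n, 0 ≤ coeff n f) (k : ℕ) (n : ℕ) :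
    0 ≤ coeff n (f ^ k) := by
  induction k generalizing n with
  | zero => simp [coeff_one]; positivity
  | succ k ih =>
    rw [pow_succ]
    exact mul_nonneg' (fun m => ih m) hf n

lemma coeff_mul_le {f g F G : PowerSeries ℝ} (hf : ∀ n, 0 ≤ coeff n f)
    (hg : ∀ n, 0 ≤ coeff n g) (hF : ∀ n, coeff n f ≤ coeff n F)
    (hG : ∀ n, coeff n g ≤ coeff n G) (n : ℕ) :
    coeff n (f * g) ≤ coeff n (F * G) := by
  rw [coeff_mul, coeff_mul]
  exact Finset.sum_le_sum fun p _ =>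
    mul_le_mul (hF p.1) (hG p.2) (hg p.2) ((hf p.1).trans (hF p.1))

lemma coeff_pow_le {f F : PowerSeries ℝ} (hf : ∀ n, 0 ≤ coeff n f)
    (hF : ∀ n, coeff n f ≤ coeff n F) (k : ℕ) (n : ℕ) :
    coeff n (f ^ k) ≤ coeff n (F ^ k) := by
  induction k generalizing n with
  | zero => simp
  | succ k ih =>
    rw [pow_succ, pow_succ]
    exact coeff_mul_le (pow_nonneg' hf k) hf (fun m => ih m) hF n

lemma coeff_pow_eq_zero {f : PowerSeries ℝ} (h0 : coeff 0 f = 0) {n k : ℕ} (h : n < k) :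
    coeff n (f ^ k) = 0 := by
  induction k generalizing n with
  | zero => omega
  | succ k ih =>
    rw [pow_succ, coeff_mul]
    apply Finset.sum_eq_zero
    rintro ⟨a, b⟩ hp
    have hab : a + b = n := Finset.HasAntidiagonal.mem_antidiagonal.1 hp
    rcases Nat.eq_zero_or_pos b with hb | hb
    · subst hb
      rw [h0, mul_zero]
    · have ha' : a < k := by omega
      rw [ih ha', zero_mul]

/-- Monotonicity of coefficients of `k`-th powers (`k ≥ 2`) when the comparison only holds
below degree `n`, for series with zero constant term. -/
lemma coeff_pow_le_of_lt {f F : PowerSeries ℝ} (hf : ∀ i, 0 ≤ coeff i f)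
    (hFpos : ∀ i, 0 ≤ coeff i F) (hf0 : coeff 0 f = 0) {n : ℕ}
    (h : ∀ i, i < n → coeff i f ≤ coeff i F) :
    ∀ k, 2 ≤ k → ∀ j, j ≤ n → coeff j (f ^ k) ≤ coeff j (F ^ k) := by
  intro k
  induction k with
  | zero => omega
  | succ k ih =>
    intro hk j hj
    rcases Nat.lt_or_ge k 2 with hk2 | hk2
    · -- k + 1 = 2
      have hk1 : k = 1 := by omega
      subst hk1
      rw [pow_succ f 1, pow_succ F 1, pow_one, pow_one, coeff_mul, coeff_mul]
      apply Finset.sum_le_sum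
      rintro ⟨a, b⟩ hp
      have hab : a + b = j := Finset.HasAntidiagonal.mem_antidiagonal.1 hp
      rcases Nat.eq_zero_or_pos a with ha | ha
      · subst ha; rw [hf0, zero_mul]; exact mul_nonneg (hFpos 0) (hFpos b)
      rcases Nat.eq_zero_or_pos b with hb | hb
      · subst hb; rw [hf0, mul_zero]; exact mul_nonneg (hFpos a) (hFpos 0)
      have haa : a < n := by omega
      have hbb : b < n := by omega
      exact mul_le_mul (h a haa) (h b hbb) (hf b) ((hf a).trans (h a haa))
    · rw [pow_succ, pow_succ, coeff_mul, coeff_mul]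
      apply Finset.sum_le_sum
      rintro ⟨a, b⟩ hp
      have hab : a + b = j := Finset.HasAntidiagonal.mem_antidiagonal.1 hp
      rcases Nat.eq_zero_or_pos b with hb | hb
      · subst hb
        rw [hf0, mul_zero]
        exact mul_nonneg (pow_nonneg' hFpos k a) (hFpos 0)
      rcases Nat.eq_zero_or_pos a with ha | ha
      · subst ha
        rw [coeff_pow_eq_zero hf0 (by omega), zero_mul]
        exact mul_nonneg (pow_nonneg' hFpos k 0) (hFpos b)
      have hbb : b < n := by omega
      exact mul_le_mul (ih hk2 a (by omega)) (h b hbb) (hf b)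
        ((pow_nonneg' hFpos k a))

end Siegel2


namespace Siegel3

open Finset

lemma catalan_mono_succ (n : ℕ) : catalan n ≤ catalan (n + 1) := by
  rw [catalan_succ']
  have hmem : ((n, 0) : ℕ × ℕ) ∈ Finset.HasAntidiagonal.antidiagonal n := by simp
  calc catalan n = catalan n * catalan 0 := by simp
    _ ≤ _ := Finset.single_le_sum (f := fun p : ℕ × ℕ => catalan p.1 * catalan p.2)
        (fun _ _ => Nat.zero_le _) hmem

lemma catalan_le_four_pow (n : ℕ) : catalan n ≤ 4 ^ n := by
  have h1 : catalan n ≤ Nat.centralBinom n := by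
    calc catalan n ≤ (n + 1) * catalan n := Nat.le_mul_of_pos_left _ (by omega)
      _ = Nat.centralBinom n := succ_mul_catalan_eq_centralBinom n
  refine h1.trans ?_
  have h2 : Nat.centralBinom n ≤ 2 ^ (2 * n) := by
    rw [Nat.centralBinom]
    calc (2 * n).choose n ≤ ∑ i ∈ Finset.range (2 * n + 1), (2 * n).choose i :=
          Finset.single_le_sum (fun _ _ => Nat.zero_le _) (by simp; omega)
      _ = 2 ^ (2 * n) := Nat.sum_range_choose (2 * n)
  calc Nat.centralBinom n ≤ 2 ^ (2 * n) := h2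
    _ = 4 ^ n := by rw [pow_mul]; norm_num

/-- The Catalan-type majorant sequence: `y 0 = 0`, `y 1 = 1`,
`y (n+2) = a * y (n+1) + e * ∑_{i+j=n+2, i,j ≥ 1} y i * y j`. -/
noncomputable def y (a e : ℝ) : ℕ → ℝ
  | 0 => 0
  | 1 => 1
  | (n + 2) => a * y a e (n + 1) +
      e * ∑ i ∈ (Finset.range (n + 1)).attach, y a e (i.1 + 1) * y a e (n + 1 - i.1)
  decreasing_by
  all_goals try (have := i.2; simp only [Finset.mem_range] at this)
  all_goals simp_wf
  all_goals omega

lemma y_zero (a e : ℝ) : y a e 0 = 0 := by simp only [y]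
lemma y_one (a e : ℝ) : y a e 1 = 1 := by simp only [y]
lemma y_succ (a e : ℝ) (n : ℕ) : y a e (n + 2) = a * y a e (n + 1) +
    e * ∑ i ∈ Finset.range (n + 1), y a e (i + 1) * y a e (n + 1 - i) := by
  simp only [y]
  rw [← Finset.sum_attach (Finset.range (n + 1)) (fun i => y a e (i + 1) * y a e (n + 1 - i))]

lemma y_nonneg {a e : ℝ} (ha : 0 ≤ a) (he : 0 ≤ e) (n : ℕ) : 0 ≤ y a e n := by
  induction n using Nat.strong_induction_on with
  | _ n ih =>
    match n with
    | 0 => rw [y_zero]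
    | 1 => rw [y_one]; norm_num
    | (n + 2) =>
      rw [y_succ]
      have h1 : 0 ≤ y a e (n + 1) := ih (n + 1) (by omega)
      have h2 : 0 ≤ ∑ i ∈ Finset.range (n + 1), y a e (i + 1) * y a e (n + 1 - i) :=
        Finset.sum_nonneg fun i hi =>
          mul_nonneg (ih (i + 1) (by simp at hi; omega)) (ih (n + 1 - i) (by omega))
      positivity

lemma y_le_catalan {a e : ℝ} (ha : 0 ≤ a) (he : 0 ≤ e) :
    ∀ n, 1 ≤ n → y a e n ≤ (a + e) ^ (n - 1) * (catalan (n - 1) : ℝ) := by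
  intro n
  induction n using Nat.strong_induction_on with
  | _ n ih =>
    match n with
    | 0 => omega
    | 1 => intro _; simp [y_one]
    | (n + 2) =>
      intro _
      have hae : 0 ≤ a + e := by positivity
      rw [y_succ]
      have hstep : ∑ i ∈ Finset.range (n + 1), y a e (i + 1) * y a e (n + 1 - i) ≤
          (a + e) ^ n * (catalan (n + 1) : ℝ) := by
        have : ∀ i ∈ Finset.range (n + 1), y a e (i + 1) * y a e (n + 1 - i) ≤
            ((a + e) ^ i * catalan i) * ((a + e) ^ (n - i) * catalan (n - i)) := by
          intro i hi
          simp only [Finset.mem_range] at hi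
          have h1 := ih (i + 1) (by omega) (by omega)
          have h2 := ih (n + 1 - i) (by omega) (by omega)
          simp only [Nat.add_sub_cancel] at h1
          have he2 : n + 1 - i - 1 = n - i := by omega
          rw [he2] at h2
          exact mul_le_mul h1 h2 (y_nonneg ha he _)
            (by positivity)
        refine (Finset.sum_le_sum this).trans ?_
        have hsum : ∑ i ∈ Finset.range (n + 1),
            ((a + e) ^ i * (catalan i : ℝ)) * ((a + e) ^ (n - i) * catalan (n - i)) =
            (a + e) ^ n * ∑ i ∈ Finset.range (n + 1), (catalan i : ℝ) * catalan (n - i) := by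
          rw [Finset.mul_sum]
          refine Finset.sum_congr rfl fun i hi => ?_
          simp only [Finset.mem_range] at hi
          rw [mul_mul_mul_comm, ← pow_add]
          have : i + (n - i) = n := by omega
          rw [this]
        rw [hsum]
        have hcat : ∑ i ∈ Finset.range (n + 1), (catalan i : ℝ) * catalan (n - i) =
            (catalan (n + 1) : ℝ) := by
          rw [catalan_succ]
          push_cast
          rw [← Finset.sum_range fun i => (catalan i : ℝ) * catalan (n - i)]
        rw [hcat]
      have hprev : y a e (n + 1) ≤ (a + e) ^ n * (catalan (n + 1) : ℝ) := by
        have := ih (n + 1) (by omega) (by omega)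
        simp only [Nat.add_sub_cancel] at this
        refine this.trans ?_
        have := catalan_mono_succ n
        have hc : (catalan n : ℝ) ≤ catalan (n + 1) := by exact_mod_cast this
        exact mul_le_mul_of_nonneg_left hc (by positivity)
      calc a * y a e (n + 1) + e * ∑ i ∈ Finset.range (n + 1), y a e (i + 1) * y a e (n + 1 - i)
          ≤ a * ((a + e) ^ n * catalan (n + 1)) + e * ((a + e) ^ n * catalan (n + 1)) := by
            refine add_le_add (mul_le_mul_of_nonneg_left hprev ha) ?_
            exact mul_le_mul_of_nonneg_left hstep he
        _ = (a + e) ^ (n + 1) * catalan (n + 1) := by ring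
        _ = (a + e) ^ (n + 2 - 1) * catalan (n + 2 - 1) := by norm_num

end Siegel3


namespace Siegel4
open Siegel3 Siegel2 Finset PowerSeries

variable {a e D : ℝ}

lemma sq_coeff (a e : ℝ) (N : ℕ) :
    coeff (N + 2) ((PowerSeries.mk (y a e)) ^ 2) =
      ∑ i ∈ Finset.range (N + 1), y a e (i + 1) * y a e (N + 1 - i) := by
  rw [pow_two, coeff_mul, Finset.Nat.sum_antidiagonal_eq_sum_range_succ_mk]
  simp only [coeff_mk]
  rw [Finset.sum_range_succ', Finset.sum_range_succ]
  simp only [y_zero, mul_zero, zero_mul, add_zero]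
  rw [show N + 2 - (N + 1 + 1) = 0 from by omega]
  simp only [y_zero, mul_zero, add_zero]
  refine Finset.sum_congr rfl fun i hi => ?_
  rw [show N + 2 - (i + 1) = N + 1 - i from by omega]

lemma Ssum (hD : 0 ≤ D) (ha : 0 ≤ a) (he : e = a + D * a ^ 2) :
    ∀ n, ∑ k ∈ Finset.Icc 2 n, D * a ^ k * coeff n ((PowerSeries.mk (y a e)) ^ k)
      ≤ y a e n := by
  have he' : 0 ≤ e := by rw [he]; positivity
  set Y := PowerSeries.mk (y a e) with hY
  have hY0 : coeff 0 Y = 0 := by simp [hY, y_zero]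
  have hYnn : ∀ n, 0 ≤ coeff n Y := by
    intro n; simpa [hY] using y_nonneg ha he' n
  intro n
  induction n using Nat.strong_induction_on with
  | _ n ih =>
    match n with
    | 0 => simp [y_zero]
    | 1 => rw [show Finset.Icc 2 1 = ∅ from rfl]; simp [y_one]
    | (N + 2) =>
      have hsplit : Finset.Icc 2 (N + 2) = insert 2 (Finset.Icc 3 (N + 2)) := by
        ext k; simp; omega
      rw [hsplit, Finset.sum_insert (by simp)]
      have hmap : Finset.Icc 3 (N + 2) = (Finset.Icc 2 (N + 1)).map
          (addRightEmbedding 1) := by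
        rw [Finset.map_add_right_Icc]
      rw [hmap, Finset.sum_map]
      simp only [addRightEmbedding_apply]
      have hrw : ∀ k, D * a ^ (k + 1) * coeff (N + 2) (Y ^ (k + 1)) =
          ∑ p ∈ Finset.HasAntidiagonal.antidiagonal (N + 2),
            a * y a e p.1 * (D * a ^ k * coeff p.2 (Y ^ k)) := by
        intro k
        rw [pow_succ' Y k, coeff_mul, Finset.mul_sum]
        refine Finset.sum_congr rfl fun p _ => ?_
        simp only [hY, coeff_mk]
        ring
      rw [Finset.sum_congr rfl fun k _ => hrw k, Finset.sum_comm]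
      have hinner : ∀ p ∈ Finset.HasAntidiagonal.antidiagonal (N + 2),
          ∑ k ∈ Finset.Icc 2 (N + 1), a * y a e p.1 * (D * a ^ k * coeff p.2 (Y ^ k))
            ≤ a * y a e p.1 * y a e p.2 := by
        intro p hp
        have hps : p.1 + p.2 = N + 2 := Finset.HasAntidiagonal.mem_antidiagonal.1 hp
        rw [← Finset.mul_sum]
        rcases Nat.eq_zero_or_pos p.1 with h1 | h1
        · rw [h1, y_zero, mul_zero, zero_mul, zero_mul]
        · have h2 : p.2 ≤ N + 1 := by omega
          have hsub : ∑ k ∈ Finset.Icc 2 (N + 1), D * a ^ k * coeff p.2 (Y ^ k) =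
              ∑ k ∈ Finset.Icc 2 p.2, D * a ^ k * coeff p.2 (Y ^ k) := by
            symm
            apply Finset.sum_subset
            · intro k hk; simp only [Finset.mem_Icc] at *; omega
            · intro k hk hk2
              simp only [Finset.mem_Icc] at hk hk2
              rw [coeff_pow_eq_zero hY0 (by omega), mul_zero]
          rw [hsub]
          have := ih p.2 (by omega)
          exact mul_le_mul_of_nonneg_left this
            (mul_nonneg ha (y_nonneg ha he' _))
      calc D * a ^ 2 * coeff (N + 2) (Y ^ 2) +
            ∑ p ∈ Finset.HasAntidiagonal.antidiagonal (N + 2),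
              ∑ k ∈ Finset.Icc 2 (N + 1), a * y a e p.1 * (D * a ^ k * coeff p.2 (Y ^ k))
          ≤ D * a ^ 2 * coeff (N + 2) (Y ^ 2) +
            ∑ p ∈ Finset.HasAntidiagonal.antidiagonal (N + 2), a * y a e p.1 * y a e p.2 :=
            add_le_add_right (Finset.sum_le_sum hinner) _
        _ = e * coeff (N + 2) (Y ^ 2) := by
            have : ∑ p ∈ Finset.HasAntidiagonal.antidiagonal (N + 2), a * y a e p.1 * y a e p.2 =
                a * coeff (N + 2) (Y ^ 2) := by
              rw [pow_two, coeff_mul, Finset.mul_sum]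
              refine Finset.sum_congr rfl fun p _ => ?_
              simp only [hY, coeff_mk]; ring
            rw [this, he]; ring
        _ ≤ y a e (N + 2) := by
            rw [y_succ, sq_coeff]
            have : 0 ≤ a * y a e (N + 1) := mul_nonneg ha (y_nonneg ha he' _)
            linarith
end Siegel4

namespace Siegel
/-- Definitional unfolding of `T`. -/
lemma T_def (f : MvPowerSeries (Fin 2) ℝ) (n : ℕ) :
    T f n = ∑ m ∈ S n, MvPowerSeries.coeff m f := rfl
end Siegel

namespace Siegel5
open Siegel Siegel2 Siegel3 Finset

lemma mv_mul_nonneg {f g : MvPowerSeries (Fin 2) ℝ}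
    (hf : ∀ m, 0 ≤ MvPowerSeries.coeff m f) (hg : ∀ m, 0 ≤ MvPowerSeries.coeff m g)
    (m : Fin 2 →₀ ℕ) : 0 ≤ MvPowerSeries.coeff m (f * g) := by
  classical
  rw [MvPowerSeries.coeff_mul]
  exact Finset.sum_nonneg fun p _ => mul_nonneg (hf p.1) (hg p.2)

lemma mv_pow_nonneg {f : MvPowerSeries (Fin 2) ℝ}
    (hf : ∀ m, 0 ≤ MvPowerSeries.coeff m f) (k : ℕ) (m : Fin 2 →₀ ℕ) :
    0 ≤ MvPowerSeries.coeff m (f ^ k) := by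
  induction k generalizing m with
  | zero =>
    rw [pow_zero]
    classical
    rw [MvPowerSeries.coeff_one]
    split_ifs <;> norm_num
  | succ k ih =>
    rw [pow_succ]
    exact mv_mul_nonneg (fun m' => ih m') hf m

lemma T_le_of_le {f g : MvPowerSeries (Fin 2) ℝ} {F G : PowerSeries ℝ}
    (hf : ∀ m, 0 ≤ MvPowerSeries.coeff m f) (hg : ∀ m, 0 ≤ MvPowerSeries.coeff m g)
    (h1 : ∀ n, T f n ≤ PowerSeries.coeff n F) (h2 : ∀ n, T g n ≤ PowerSeries.coeff n G)
    (n : ℕ) : T (f * g) n ≤ PowerSeries.coeff n (F * G) := by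
  rw [T_mul, PowerSeries.coeff_mul]
  refine Finset.sum_le_sum fun p _ => ?_
  exact mul_le_mul (h1 p.1) (h2 p.2) (T_nonneg hg p.2) (le_trans (T_nonneg hf p.1) (h1 p.1))

end Siegel5

open Siegel Siegel2 Siegel3 Siegel4 Siegel5 in
theorem siegel_majorant_lemma
    (φ r : Fin 2 → MvPowerSeries (Fin 2) ℂ)
    (hφlow : ∀ (j : Fin 2) (m : Fin 2 →₀ ℕ), m 0 + m 1 ≤ 1 →
      MvPowerSeries.coeff m (φ j) = 0)
    (hrlow : ∀ (j : Fin 2) (m : Fin 2 →₀ ℕ), m 0 + m 1 ≤ 1 →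
      MvPowerSeries.coeff m (r j) = 0)
    (hrconv : ∃ C ρ : ℝ, 0 < C ∧ 0 < ρ ∧ ∀ (j : Fin 2) (m : Fin 2 →₀ ℕ),
      ‖MvPowerSeries.coeff m (r j)‖ ≤ C * ρ ^ (m 0 + m 1))
    (hmaj : ∀ (j : Fin 2) (m : Fin 2 →₀ ℕ),
      ‖MvPowerSeries.coeff m (φ j)‖ ≤
        MvPowerSeries.coeff m
          (substPair (majorant (r j))
            (MvPowerSeries.X 0 + majorant (φ 0))
            (MvPowerSeries.X 1 + majorant (φ 1)))) :
    ∃ C' ρ' : ℝ, 0 < C' ∧ 0 < ρ' ∧ ∀ (j : Fin 2) (m : Fin 2 →₀ ℕ),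
      ‖MvPowerSeries.coeff m (φ j)‖ ≤ C' * ρ' ^ (m 0 + m 1) := by
  classical
  obtain ⟨C, ρ, hC, hρ, hr⟩ := hrconv
  set w₁ : MvPowerSeries (Fin 2) ℝ := MvPowerSeries.X 0 + majorant (φ 0) with hw₁
  set w₂ : MvPowerSeries (Fin 2) ℝ := MvPowerSeries.X 1 + majorant (φ 1) with hw₂
  have hmajeq : ∀ (f : MvPowerSeries (Fin 2) ℂ) m,
      MvPowerSeries.coeff m (majorant f) = ‖MvPowerSeries.coeff m f‖ := by
    intro f m
    rw [MvPowerSeries.coeff_apply]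
    rfl
  have hmajnn : ∀ (f : MvPowerSeries (Fin 2) ℂ) m, 0 ≤ MvPowerSeries.coeff m (majorant f) := by
    intro f m
    rw [hmajeq]
    exact norm_nonneg _
  have hw1nn : ∀ m, 0 ≤ MvPowerSeries.coeff m w₁ := by
    intro m
    rw [hw₁, map_add, MvPowerSeries.coeff_X]
    have := hmajnn (φ 0) m
    split_ifs <;> linarith
  have hw2nn : ∀ m, 0 ≤ MvPowerSeries.coeff m w₂ := by
    intro m
    rw [hw₂, map_add, MvPowerSeries.coeff_X]
    have := hmajnn (φ 1) m
    split_ifs <;> linarith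
  set c : ℕ → ℝ := fun n => T (majorant (φ 0)) n + T (majorant (φ 1)) n with hcdef
  set G : PowerSeries ℝ := PowerSeries.mk (fun n => (if n = 1 then (1:ℝ) else 0) + c n)
    with hGdef
  have hGcoeff : ∀ n, PowerSeries.coeff n G = (if n = 1 then (1:ℝ) else 0) + c n := by
    intro n; rw [hGdef, PowerSeries.coeff_mk]
  have hcn : ∀ n, c n = T (majorant (φ 0)) n + T (majorant (φ 1)) n := fun n => rfl
  have hTlow : ∀ (j : Fin 2) (n : ℕ), n ≤ 1 → T (majorant (φ j)) n = 0 := by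
    intro j n hn
    rw [T_def]
    refine Finset.sum_eq_zero fun m hm => ?_
    rw [hmajeq, hφlow j m (by rw [mem_S.1 hm]; exact hn), norm_zero]
  have hcnn : ∀ n, 0 ≤ c n := fun n =>
    add_nonneg (T_nonneg (hmajnn _) n) (T_nonneg (hmajnn _) n)
  have hGnn : ∀ n, 0 ≤ PowerSeries.coeff n G := by
    intro n; rw [hGcoeff]
    have := hcnn n
    split_ifs <;> linarith
  have hG0 : PowerSeries.coeff 0 G = 0 := by
    rw [hGcoeff]
    simp [hcn, hTlow 0 0 (by norm_num), hTlow 1 0 (by norm_num)]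
  have hTw1 : ∀ n, T w₁ n ≤ PowerSeries.coeff n G := by
    intro n
    rw [hw₁, T_add, T_X, hGcoeff]
    have h2 := T_nonneg (hmajnn (φ 1)) n
    have := hcn n
    linarith
  have hTw2 : ∀ n, T w₂ n ≤ PowerSeries.coeff n G := by
    intro n
    rw [hw₂, T_add, T_X, hGcoeff]
    have h2 := T_nonneg (hmajnn (φ 0)) n
    have := hcn n
    linarith
  have hTpow1 : ∀ k n, T (w₁ ^ k) n ≤ PowerSeries.coeff n (G ^ k) := by
    intro k
    induction k with
    | zero =>
      intro n
      rw [pow_zero, pow_zero, T_one, PowerSeries.coeff_one]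
    | succ k ih =>
      intro n
      rw [pow_succ, pow_succ]
      exact T_le_of_le (mv_pow_nonneg hw1nn k) hw1nn ih hTw1 n
  have hTpow2 : ∀ k n, T (w₂ ^ k) n ≤ PowerSeries.coeff n (G ^ k) := by
    intro k
    induction k with
    | zero =>
      intro n
      rw [pow_zero, pow_zero, T_one, PowerSeries.coeff_one]
    | succ k ih =>
      intro n
      rw [pow_succ, pow_succ]
      exact T_le_of_le (mv_pow_nonneg hw2nn k) hw2nn ih hTw2 n
  have hTpow : ∀ (k₁ k₂ n : ℕ), T (w₁ ^ k₁ * w₂ ^ k₂) n ≤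
      PowerSeries.coeff n (G ^ (k₁ + k₂)) := by
    intro k₁ k₂ n
    rw [pow_add]
    exact T_le_of_le (mv_pow_nonneg hw1nn k₁) (mv_pow_nonneg hw2nn k₂)
      (hTpow1 k₁) (hTpow2 k₂) n
  -- the key estimate
  have hkey : ∀ (j : Fin 2) (n : ℕ), T (majorant (φ j)) n ≤
      ∑ k ∈ Finset.Icc 2 n, C * (2*ρ) ^ k * PowerSeries.coeff n (G ^ k) := by
    intro j n
    set s : Finset (ℕ × ℕ) := Finset.range (n+1) ×ˢ Finset.range (n+1) with hsdef
    set Q : ℕ → ℝ := fun k => if 2 ≤ k ∧ k ≤ n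
      then C * ρ ^ k * PowerSeries.coeff n (G ^ k) else 0 with hQdef
    have hQnn : ∀ k, 0 ≤ Q k := by
      intro k
      rw [hQdef]
      simp only
      split_ifs with h
      · have := pow_nonneg' hGnn k n
        positivity
      · exact le_refl 0
    have hQpos : ∀ k, 2 ≤ k → k ≤ n →
        Q k = C * ρ ^ k * PowerSeries.coeff n (G ^ k) := by
      intro k h1 h2; rw [hQdef]; simp only; rw [if_pos ⟨h1, h2⟩]
    have hQzero : ∀ k, ¬(2 ≤ k ∧ k ≤ n) → Q k = 0 := by
      intro k h; rw [hQdef]; simp only; rw [if_neg h]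
    have hper : ∀ m ∈ S n, MvPowerSeries.coeff m (substPair (majorant (r j)) w₁ w₂) =
        ∑ p ∈ s, ‖MvPowerSeries.coeff (idx p.1 p.2) (r j)‖ *
          MvPowerSeries.coeff m (w₁ ^ p.1 * w₂ ^ p.2) := by
      intro m hm
      have hmn : m 0 + m 1 = n := mem_S.1 hm
      rw [MvPowerSeries.coeff_apply]
      simp only [substPair, hmn, hsdef]
      rfl
    have step1 : T (majorant (φ j)) n ≤
        ∑ m ∈ S n, MvPowerSeries.coeff m (substPair (majorant (r j)) w₁ w₂) := by
      rw [T_def]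
      exact Finset.sum_le_sum fun m _ => by rw [hmajeq]; exact hmaj j m
    have step2 : ∑ m ∈ S n, MvPowerSeries.coeff m (substPair (majorant (r j)) w₁ w₂) =
        ∑ p ∈ s, ‖MvPowerSeries.coeff (idx p.1 p.2) (r j)‖ * T (w₁ ^ p.1 * w₂ ^ p.2) n := by
      rw [Finset.sum_congr rfl hper, Finset.sum_comm]
      refine Finset.sum_congr rfl fun p _ => ?_
      rw [T_def, Finset.mul_sum]
    have hQ : ∀ p ∈ s, ‖MvPowerSeries.coeff (idx p.1 p.2) (r j)‖ *
        T (w₁ ^ p.1 * w₂ ^ p.2) n ≤ Q (p.1 + p.2) := by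
      intro p hp
      by_cases hl : p.1 + p.2 ≤ 1
      · have hz : MvPowerSeries.coeff (idx p.1 p.2) (r j) = 0 :=
          hrlow j _ (by rw [idx_apply_zero, idx_apply_one]; exact hl)
        rw [hz, norm_zero, zero_mul]
        exact hQnn _
      · by_cases hn2 : p.1 + p.2 ≤ n
        · have hb := hr j (idx p.1 p.2)
          rw [idx_apply_zero, idx_apply_one] at hb
          have ht := hTpow p.1 p.2 n
          rw [hQpos _ (by omega) hn2]
          have hTnn := T_nonneg (f := w₁ ^ p.1 * w₂ ^ p.2)
            (mv_mul_nonneg (mv_pow_nonneg hw1nn p.1) (mv_pow_nonneg hw2nn p.2)) n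
          exact mul_le_mul hb ht hTnn (by positivity)
        · have ht := hTpow p.1 p.2 n
          have hz : PowerSeries.coeff n (G ^ (p.1 + p.2)) = 0 :=
            coeff_pow_eq_zero hG0 (by omega)
          have hTnn := T_nonneg (f := w₁ ^ p.1 * w₂ ^ p.2)
            (mv_mul_nonneg (mv_pow_nonneg hw1nn p.1) (mv_pow_nonneg hw2nn p.2)) n
          have hT0 : T (w₁ ^ p.1 * w₂ ^ p.2) n = 0 := le_antisymm (hz ▸ ht) hTnn
          rw [hT0, mul_zero]
          exact hQnn _
    have hmaps : ∀ p ∈ s, p.1 + p.2 ∈ Finset.range (2*n+1) := by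
      intro p hp
      rw [hsdef] at hp
      simp only [Finset.mem_product, Finset.mem_range] at hp ⊢
      omega
    have hfib : ∀ k ∈ Finset.range (2*n+1),
        ∑ p ∈ s.filter (fun p => p.1 + p.2 = k), Q (p.1 + p.2) ≤ (2:ℝ)^k * Q k := by
      intro k _
      have heq : ∀ p ∈ s.filter (fun p => p.1 + p.2 = k), Q (p.1 + p.2) = Q k :=
        fun p hp => by rw [(Finset.mem_filter.1 hp).2]
      rw [Finset.sum_congr rfl heq, Finset.sum_const, nsmul_eq_mul]
      have hcard : (s.filter (fun p => p.1 + p.2 = k)).card ≤ k + 1 := by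
        have : (s.filter (fun p => p.1 + p.2 = k)).card ≤ (Finset.range (k+1)).card := by
          apply Finset.card_le_card_of_injOn (fun p => p.1)
          · intro p hp
            simp only [Finset.mem_coe, Finset.mem_filter] at hp
            simp only [Finset.mem_coe, Finset.mem_range]
            omega
          · intro p hp q hq hpq
            simp only [Finset.coe_filter, Set.mem_setOf_eq] at hp hq
            have h1 := hp.2
            have h2 := hq.2
            have h3 : p.1 = q.1 := hpq
            exact Prod.ext h3 (by omega)
        simpa using this
      have h2k : ((k:ℝ) + 1) ≤ 2^k := by
        have := Nat.lt_two_pow_self (n := k)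
        exact_mod_cast Nat.succ_le_of_lt this
      calc ((s.filter (fun p => p.1 + p.2 = k)).card : ℝ) * Q k
          ≤ ((k:ℝ) + 1) * Q k := by
            apply mul_le_mul_of_nonneg_right _ (hQnn k)
            exact_mod_cast hcard
        _ ≤ (2:ℝ)^k * Q k := mul_le_mul_of_nonneg_right h2k (hQnn k)
    have hsub : Finset.Icc 2 n ⊆ Finset.range (2*n+1) := by
      intro k hk
      simp only [Finset.mem_Icc] at hk
      simp only [Finset.mem_range]
      omega
    calc T (majorant (φ j)) n
        ≤ ∑ m ∈ S n, MvPowerSeries.coeff m (substPair (majorant (r j)) w₁ w₂) := step1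
      _ = ∑ p ∈ s, ‖MvPowerSeries.coeff (idx p.1 p.2) (r j)‖ *
            T (w₁ ^ p.1 * w₂ ^ p.2) n := step2
      _ ≤ ∑ p ∈ s, Q (p.1 + p.2) := Finset.sum_le_sum hQ
      _ = ∑ k ∈ Finset.range (2*n+1), ∑ p ∈ s.filter (fun p => p.1 + p.2 = k),
            Q (p.1 + p.2) := (Finset.sum_fiberwise_of_maps_to hmaps _).symm
      _ ≤ ∑ k ∈ Finset.range (2*n+1), (2:ℝ)^k * Q k := Finset.sum_le_sum hfib
      _ = ∑ k ∈ Finset.Icc 2 n, (2:ℝ)^k * Q k := by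
          symm
          apply Finset.sum_subset hsub
          intro k _ hk2
          rw [hQzero k (by simpa [Finset.mem_Icc] using hk2), mul_zero]
      _ = ∑ k ∈ Finset.Icc 2 n, C * (2*ρ) ^ k * PowerSeries.coeff n (G ^ k) := by
          refine Finset.sum_congr rfl fun k hk => ?_
          simp only [Finset.mem_Icc] at hk
          rw [hQpos k hk.1 hk.2, mul_pow]
          ring
  -- sum the two components
  have hcle : ∀ n, c n ≤ ∑ k ∈ Finset.Icc 2 n, (2*C) * (2*ρ) ^ k *
      PowerSeries.coeff n (G ^ k) := by
    intro n
    rw [hcn]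
    refine le_trans (add_le_add (hkey 0 n) (hkey 1 n)) ?_
    rw [← Finset.sum_add_distrib]
    exact le_of_eq (Finset.sum_congr rfl fun k _ => by ring)
  -- the scalar majorant
  set A : ℝ := 2*ρ with hAdef
  set D : ℝ := 2*C with hDdef
  set e : ℝ := A + D * A^2 with hedef
  have hA0 : 0 ≤ A := by rw [hAdef]; positivity
  have hD0 : 0 ≤ D := by rw [hDdef]; positivity
  have he0 : 0 ≤ e := by rw [hedef]; positivity
  have hYnn : ∀ i, 0 ≤ PowerSeries.coeff i (PowerSeries.mk (y A e)) := by
    intro i; rw [PowerSeries.coeff_mk]; exact y_nonneg hA0 he0 i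
  have hmain : ∀ n, PowerSeries.coeff n G ≤ y A e n := by
    intro n
    induction n using Nat.strong_induction_on with
    | _ n ih =>
      match n with
      | 0 => rw [hG0, y_zero]
      | 1 =>
        rw [hGcoeff, y_one]
        have : c 1 = 0 := by
          rw [hcn, hTlow 0 1 le_rfl, hTlow 1 1 le_rfl]; norm_num
        rw [this]
        norm_num
      | (N + 2) =>
        rw [hGcoeff]
        rw [if_neg (by omega), zero_add]
        refine le_trans (hcle (N+2)) (le_trans ?_ (Ssum hD0 hA0 hedef (N+2)))
        refine Finset.sum_le_sum fun k hk => ?_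
        simp only [Finset.mem_Icc] at hk
        have hGY := coeff_pow_le_of_lt hGnn hYnn hG0
          (fun i hi => le_trans (ih i hi) (le_of_eq (PowerSeries.coeff_mk i (y A e)).symm))
          k hk.1 (N+2) le_rfl
        exact mul_le_mul_of_nonneg_left hGY (by positivity)
  -- conclusion
  set B : ℝ := max 1 (4*(A+e)) with hBdef
  have hB1 : (1:ℝ) ≤ B := le_max_left _ _
  have hB4 : 4*(A+e) ≤ B := le_max_right _ _
  have hAe : 0 ≤ A + e := by positivity
  refine ⟨1, B, one_pos, lt_of_lt_of_le one_pos hB1, ?_⟩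
  intro j m
  set n := m 0 + m 1 with hn
  have h1 : ‖MvPowerSeries.coeff m (φ j)‖ ≤ T (majorant (φ j)) n := by
    rw [T_def]
    refine le_trans (le_of_eq (hmajeq (φ j) m).symm)
      (Finset.single_le_sum (fun i _ => hmajnn (φ j) i) (mem_S.2 hn.symm))
  have h2 : T (majorant (φ j)) n ≤ c n := by
    rw [hcn]
    have h0 := T_nonneg (hmajnn (φ 0)) n
    have h1' := T_nonneg (hmajnn (φ 1)) n
    match j with
    | 0 => linarith
    | 1 => linarith
  have h3 : c n ≤ PowerSeries.coeff n G := by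
    rw [hGcoeff]
    split_ifs <;> linarith [hcnn n]
  have h4 := hmain n
  have h5 : y A e n ≤ 1 * B ^ n := by
    rw [one_mul]
    match n with
    | 0 =>
      rw [y_zero, pow_zero]
      norm_num
    | (n' + 1) =>
      have hcat := y_le_catalan hA0 he0 (n' + 1) (by omega)
      simp only [Nat.add_sub_cancel] at hcat
      have hcast : (catalan n' : ℝ) ≤ 4 ^ n' := by
        exact_mod_cast catalan_le_four_pow n'
      calc y A e (n' + 1) ≤ (A+e)^n' * (catalan n' : ℝ) := hcat
        _ ≤ (A+e)^n' * 4^n' := by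
            apply mul_le_mul_of_nonneg_left hcast (pow_nonneg hAe n')
        _ = (4*(A+e))^n' := by rw [mul_pow]; ring
        _ ≤ B^n' := pow_le_pow_left₀ (by positivity) hB4 n'
        _ ≤ B^(n'+1) := pow_le_pow_right₀ hB1 (by omega)
  calc ‖MvPowerSeries.coeff m (φ j)‖ ≤ c n := le_trans h1 h2
    _ ≤ y A e n := le_trans h3 h4
    _ ≤ 1 * B ^ n := h5
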